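/- Let M ⊆ [n]^d be a subset such that every layer of [n]^d contains exactly two or zero elements of M. Then M is non-basic if and only if there exists a non-empty subset K ⊆ M and a coloring ε : K → {−1, 1} such that for every layer L, the sum Σ_{x ∈ L ∩ K} ε(x) equals 0 (i.e., every layer contains the same number of elements of K of each color). -/

import Mathlib

/-- A finite subset `M ⊆ [n]^d` (the cube identified with `Fin d → Fin n`) is *basic*
if every function on `M` decomposes as a sum of univariate functions. -/
def IsBasic {n d : ℕ} (M : Finset (Fin d → Fin n)) : Prop :=
  ∀ f : (Fin d → Fin n) → ℝ, ∃ g : Fin d → Fin n → ℝ,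
    ∀ x ∈ M, f x = ∑ i, g i (x i)

/-- Let `M ⊆ [n]^d` contain exactly two or zero elements in every layer. Then `M` is
non-basic iff there is a non-empty `K ⊆ M` and a two-coloring `ε : K → {−1,1}` such that
every layer contains the same number of elements of `K` of each color (the sum of the
colors over every layer is zero). -/
theorem nonbasic_iff_coloring {n d : ℕ} (hn : 0 < n) (hd : 0 < d)
    (M : Finset (Fin d → Fin n))
    (hlayers : ∀ (i : Fin d) (j : Fin n),
      (M.filter (fun x => x i = j)).card = 2 ∨ (M.filter (fun x => x i = j)).card = 0) :
    ¬ IsBasic M ↔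
      ∃ K ⊆ M, K.Nonempty ∧ ∃ ε : (Fin d → Fin n) → ℤ,
        (∀ x ∈ K, ε x = 1 ∨ ε x = -1) ∧
        ∀ (i : Fin d) (j : Fin n), ∑ x ∈ K.filter (fun x => x i = j), ε x = 0 := by
  constructor
  · intro hnb
    -- the evaluation linear map
    set T : (Fin d → Fin n → ℝ) →ₗ[ℝ] EuclideanSpace ℝ ↥M :=
      { toFun := fun g => WithLp.toLp 2 (fun x => ∑ i, g i (x.1 i))
        map_add' := by intro g h; ext x; simp [Finset.sum_add_distrib]
        map_smul' := by intro c g; ext x; simp [Finset.mul_sum] } with hT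
    have hsurj : ¬ Function.Surjective T := by
      intro hs
      apply hnb
      intro f
      obtain ⟨g, hg⟩ := hs (WithLp.toLp 2 (fun x : ↥M => f x.1))
      exact ⟨g, fun x hx => (congrArg (fun v => v ⟨x, hx⟩) hg).symm⟩
    have hrange : LinearMap.range T ≠ ⊤ := fun h => hsurj (LinearMap.range_eq_top.mp h)
    have horth : (LinearMap.range T)ᗮ ≠ ⊥ := by
      intro h
      exact hrange (Submodule.orthogonal_eq_bot_iff.mp h)
    obtain ⟨μ, hμmem, hμne⟩ := Submodule.exists_mem_ne_zero_of_ne_bot horth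
    set lam : (Fin d → Fin n) → ℝ := fun x => if h : x ∈ M then μ ⟨x, h⟩ else 0 with hlam
    have hlamval : ∀ x : ↥M, lam x.1 = μ x := by
      intro x; simp [hlam, x.2]
    have hsum : ∀ (i : Fin d) (j : Fin n),
        ∑ x ∈ M.filter (fun x => x i = j), lam x = 0 := by
      intro i j
      have hTmem : T (Pi.single i (Pi.single j (1:ℝ))) ∈ LinearMap.range T := ⟨_, rfl⟩
      have h0 : (inner ℝ (T (Pi.single i (Pi.single j (1:ℝ)))) μ : ℝ) = 0 :=
        (Submodule.mem_orthogonal _ μ).mp hμmem _ hTmem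
      have hTval : ∀ x : ↥M, T (Pi.single i (Pi.single j (1:ℝ))) x
          = if x.1 i = j then 1 else 0 := by
        intro x
        show (∑ k, (Pi.single i (Pi.single j (1:ℝ)) : Fin d → Fin n → ℝ) k (x.1 k)) = _
        have hterm : ∀ k, (Pi.single i (Pi.single j (1:ℝ)) : Fin d → Fin n → ℝ) k (x.1 k)
            = if k = i then (if x.1 k = j then (1:ℝ) else 0) else 0 := by
          intro k
          by_cases h : k = i <;> simp [Pi.single_apply, h]
        simp only [hterm]
        rw [Finset.sum_ite_eq' Finset.univ i (fun k => if x.1 k = j then (1:ℝ) else 0)]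
        simp
      have h0' : ∑ x : ↥M, (if x.1 i = j then (1:ℝ) else 0) * μ x = 0 := by
        calc ∑ x : ↥M, (if x.1 i = j then (1:ℝ) else 0) * μ x
            = ∑ x : ↥M, inner ℝ (T (Pi.single i (Pi.single j (1:ℝ))) x) (μ x) := by
              refine Finset.sum_congr rfl fun x _ => ?_
              rw [hTval x, RCLike.inner_apply]
              simp
          _ = 0 := by rw [← PiLp.inner_apply]; exact h0
      calc ∑ x ∈ M.filter (fun x => x i = j), lam x
          = ∑ x ∈ M, if x i = j then lam x else 0 := Finset.sum_filter _ _
        _ = ∑ x : ↥M, if x.1 i = j then lam x.1 else 0 := (Finset.sum_coe_sort M _).symm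
        _ = ∑ x : ↥M, (if x.1 i = j then (1:ℝ) else 0) * μ x := by
            refine Finset.sum_congr rfl fun x _ => ?_
            rw [hlamval x]
            by_cases h : x.1 i = j <;> simp [h]
        _ = 0 := h0'
    have hx0 : ∃ x0 : ↥M, μ x0 ≠ 0 := by
      by_contra h
      push_neg at h
      exact hμne (PiLp.ext h)
    obtain ⟨x0, hx0⟩ := hx0
    have hMne : M.Nonempty := ⟨x0.1, x0.2⟩
    obtain ⟨z, hzM, hz⟩ := M.exists_max_image (fun x => |lam x|) hMne
    set c : ℝ := |lam z| with hc
    have hcpos : 0 < c := by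
      have h1 : 0 < |lam x0.1| := abs_pos.mpr (by rw [hlamval x0]; exact hx0)
      exact lt_of_lt_of_le h1 (hz x0.1 x0.2)
    set K : Finset (Fin d → Fin n) := M.filter (fun x => |lam x| = c) with hK
    refine ⟨K, Finset.filter_subset _ _, ⟨z, Finset.mem_filter.mpr ⟨hzM, rfl⟩⟩,
      fun x => if 0 < lam x then 1 else -1, ?_, ?_⟩
    · intro x _
      by_cases h : 0 < lam x <;> simp [h]
    · intro i j
      rcases hlayers i j with h2 | h0
      · obtain ⟨a, b, hab, hM2⟩ := Finset.card_eq_two.mp h2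
        have hsab : lam a + lam b = 0 := by
          have h := hsum i j
          rwa [hM2, Finset.sum_pair hab] at h
        have hKf : K.filter (fun x => x i = j)
            = ({a, b} : Finset _).filter (fun x => |lam x| = c) := by
          rw [hK, Finset.filter_comm, hM2]
        have habs : |lam a| = |lam b| := by
          rw [show lam a = -lam b by linarith, abs_neg]
        by_cases hca : |lam a| = c
        · have hcb : |lam b| = c := by rw [← habs]; exact hca
          have hfull : ({a, b} : Finset _).filter (fun x => |lam x| = c) = {a, b} := by
            refine Finset.filter_true_of_mem fun x hx => ?_
            rcases Finset.mem_insert.mp hx with h | h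
            · rw [h]; exact hca
            · rw [Finset.mem_singleton.mp h]; exact hcb
          rw [hKf, hfull, Finset.sum_pair hab]
          have ha0 : lam a ≠ 0 := by
            intro h
            rw [h, abs_zero] at hca
            linarith
          rcases lt_or_gt_of_ne ha0 with h | h
          · have hb : 0 < lam b := by linarith
            simp [not_lt.mpr (le_of_lt h), hb]
          · have hb : ¬ 0 < lam b := by
              intro hb; linarith
            simp [h, hb]
        · have hcb : ¬ |lam b| = c := by rw [← habs]; exact hca
          have hemp : ({a, b} : Finset _).filter (fun x => |lam x| = c) = ∅ := by
            refine Finset.filter_false_of_mem fun x hx => ?_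
            rcases Finset.mem_insert.mp hx with h | h
            · rw [h]; exact hca
            · rw [Finset.mem_singleton.mp h]; exact hcb
          rw [hKf, hemp, Finset.sum_empty]
      · have hemp : M.filter (fun x => x i = j) = ∅ := Finset.card_eq_zero.mp h0
        have : K.filter (fun x => x i = j) = ∅ := by
          refine Finset.subset_empty.mp ?_
          rw [← hemp]
          exact Finset.filter_subset_filter _ (Finset.filter_subset _ _)
        rw [this, Finset.sum_empty]
  · rintro ⟨K, hKM, ⟨x0, hx0⟩, ε, hεpm, hεsum⟩ hbasic
    obtain ⟨g, hg⟩ := hbasic (fun x => if x = x0 then 1 else 0)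
    have key : ∑ x ∈ K, (ε x : ℝ) * (if x = x0 then (1:ℝ) else 0) = 0 := by
      calc ∑ x ∈ K, (ε x : ℝ) * (if x = x0 then (1:ℝ) else 0)
          = ∑ x ∈ K, (ε x : ℝ) * ∑ i, g i (x i) := by
            refine Finset.sum_congr rfl fun x hx => ?_
            rw [← hg x (hKM hx)]
        _ = ∑ x ∈ K, ∑ i, (ε x : ℝ) * g i (x i) := by
            simp [Finset.mul_sum]
        _ = ∑ i, ∑ x ∈ K, (ε x : ℝ) * g i (x i) := Finset.sum_comm
        _ = ∑ i, ∑ j, ∑ x ∈ K.filter (fun x => x i = j), (ε x : ℝ) * g i (x i) := by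
            refine Finset.sum_congr rfl fun i _ => ?_
            exact (Finset.sum_fiberwise K (fun x => x i) (fun x => (ε x : ℝ) * g i (x i))).symm
        _ = 0 := by
            refine Finset.sum_eq_zero fun i _ => Finset.sum_eq_zero fun j _ => ?_
            have h1 : ∑ x ∈ K.filter (fun x => x i = j), (ε x : ℝ) * g i (x i)
                = ∑ x ∈ K.filter (fun x => x i = j), (ε x : ℝ) * g i j := by
              refine Finset.sum_congr rfl fun x hx => ?_
              rw [(Finset.mem_filter.mp hx).2]
            have h2 : (∑ x ∈ K.filter (fun x => x i = j), (ε x : ℝ)) = 0 := by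
              exact_mod_cast congrArg (fun z : ℤ => (z : ℝ)) (hεsum i j)
            rw [h1, ← Finset.sum_mul, h2, zero_mul]
    have h1 : ∑ x ∈ K, (ε x : ℝ) * (if x = x0 then (1:ℝ) else 0) = (ε x0 : ℝ) := by
      rw [Finset.sum_eq_single x0]
      · simp
      · intro b _ hne; simp [hne]
      · intro h; exact absurd hx0 h
    rcases hεpm x0 hx0 with h | h <;> rw [h1, h] at key <;> norm_num at key
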